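/- Let d ≥ 2 and ζ a root of unity, and let f(x) = −T_d(x) where T_d is the Chebyshev polynomial of degree d. Then the dynamical Galois group G_∞(−T_d, ζ + ζ⁻¹) over Q is abelian, i.e., all iterated preimages of ζ + ζ⁻¹ under −T_d lie in Q^ab. -/

import Mathlib

open Polynomial

section NegChebAux

open IntermediateField

/-- The set of all roots of unity in `ℂ`. -/
def rootsU : Set ℂ := {x : ℂ | ∃ k : ℕ, 1 ≤ k ∧ x ^ k = 1}

/-- The field generated over `ℚ` by all roots of unity. -/
noncomputable def Qcyc : IntermediateField ℚ ℂ := IntermediateField.adjoin ℚ rootsU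

lemma rootSet_eq (k : ℕ) :
    ((X ^ (k+1) - C 1 : ℚ[X]).rootSet ℂ) = {x : ℂ | x ^ (k+1) = 1} := by
  ext x
  rw [Polynomial.mem_rootSet]
  constructor
  · rintro ⟨-, h⟩
    simpa [sub_eq_zero] using h
  · intro h
    exact ⟨X_pow_sub_C_ne_zero (Nat.succ_pos k) 1, by simpa [sub_eq_zero] using h⟩

lemma Qcyc_eq_iSup :
    Qcyc = ⨆ k : ℕ, adjoin ℚ ((X ^ (k+1) - C 1 : ℚ[X]).rootSet ℂ) := by
  apply le_antisymm
  · rw [Qcyc, adjoin_le_iff]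
    rintro x ⟨k, hk1, hk⟩
    have hx : x ∈ adjoin ℚ ((X ^ ((k-1)+1) - C 1 : ℚ[X]).rootSet ℂ) := by
      apply subset_adjoin
      rw [rootSet_eq]
      show x ^ (k-1+1) = 1
      rwa [Nat.sub_add_cancel hk1]
    exact SetLike.le_def.mp
      (le_iSup (fun k : ℕ => adjoin ℚ ((X ^ (k+1) - C 1 : ℚ[X]).rootSet ℂ)) (k-1)) hx
  · apply iSup_le
    intro k
    rw [adjoin_le_iff, rootSet_eq]
    intro x hx
    exact subset_adjoin _ _ ⟨k+1, Nat.succ_le_succ (Nat.zero_le k), hx⟩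

instance Qcyc_normal : Normal ℚ Qcyc := by
  rw [Qcyc_eq_iSup]
  haveI : ∀ k : ℕ, Normal ℚ (adjoin ℚ ((X ^ (k+1) - C 1 : ℚ[X]).rootSet ℂ)) := by
    intro k
    haveI := adjoin_rootSet_isSplittingField
      (p := (X ^ (k+1) - C 1 : ℚ[X])) (L := ℂ) (IsAlgClosed.splits _)
    exact Normal.of_isSplittingField (X ^ (k+1) - C 1 : ℚ[X]) (hFEp := this)
  exact IntermediateField.normal_iSup ℚ ℂ _ (h := this)

instance Qcyc_isGalois : IsGalois ℚ Qcyc := by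
  haveI : Algebra.IsIntegral ℚ Qcyc := Algebra.IsAlgebraic.isIntegral
  exact ⟨⟩

lemma algHom_pow_root (φ : Qcyc →ₐ[ℚ] Qcyc) (c : Qcyc) {k : ℕ} (hk : k ≠ 0)
    (hc : c ^ k = 1) : ∃ a : ℕ, φ c = c ^ a := by
  haveI : NeZero k := ⟨hk⟩
  obtain ⟨m, hm⟩ := map_rootsOfUnity_eq_pow_self (φ : Qcyc →+* Qcyc)
    (rootsOfUnity.mkOfPowEq c hc)
  exact ⟨m, by simpa using hm⟩

/-- Any two `ℚ`-algebra endomorphisms of `Qcyc` commute. -/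
lemma Qcyc_comm (φ ψ : Qcyc →ₐ[ℚ] Qcyc) : φ.comp ψ = ψ.comp φ := by
  apply IntermediateField.algHom_ext_of_eq_adjoin ℚ (s := rootsU) (S := Qcyc) rfl
  intro x hx
  obtain ⟨k, hk1, hxk⟩ := hx
  set c : Qcyc := ⟨x, (rfl : Qcyc = adjoin ℚ rootsU).ge (subset_adjoin _ _ ⟨k, hk1, hxk⟩)⟩
    with hc_def
  have hc : c ^ k = 1 := by
    apply Subtype.ext
    push_cast
    exact hxk
  have hk0 : k ≠ 0 := by omega
  obtain ⟨a, ha⟩ := algHom_pow_root ψ c hk0 hc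
  obtain ⟨b, hb⟩ := algHom_pow_root φ c hk0 hc
  show φ (ψ c) = ψ (φ c)
  rw [ha, hb, map_pow, map_pow, ha, hb, ← pow_mul, ← pow_mul, Nat.mul_comm]

lemma Qcyc_equiv_comm (σ τ : Qcyc ≃ₐ[ℚ] Qcyc) : σ * τ = τ * σ := by
  have h := Qcyc_comm σ.toAlgHom τ.toAlgHom
  apply AlgEquiv.ext
  intro x
  exact DFunLike.congr_fun h x

lemma mem_Qcyc_of_form {γ : ℂ}
    (h : ∃ k : ℕ, 1 ≤ k ∧ ∃ μ : ℂ, μ ^ k = 1 ∧ γ = μ + μ⁻¹) : γ ∈ Qcyc := by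
  obtain ⟨k, hk, μ, hμ, rfl⟩ := h
  have h1 : μ ∈ Qcyc := subset_adjoin _ _ ⟨k, hk, hμ⟩
  exact add_mem h1 (inv_mem h1)

lemma add_inv_cases (a b : ℂ) (ha : a ≠ 0) (hb : b ≠ 0) (h : a + a⁻¹ = b + b⁻¹) :
    a = b ∨ a = b⁻¹ := by
  have h2 : (a - b) * (a * b - 1) = 0 := by
    field_simp at h
    linear_combination h
  rcases mul_eq_zero.mp h2 with h3 | h3
  · exact Or.inl (sub_eq_zero.mp h3)
  · exact Or.inr (eq_inv_of_mul_eq_one_left (sub_eq_zero.mp h3))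

lemma exists_add_inv (γ : ℂ) : ∃ μ : ℂ, μ ≠ 0 ∧ μ + μ⁻¹ = γ := by
  obtain ⟨s, hs⟩ := IsAlgClosed.exists_pow_nat_eq (γ ^ 2 - 4) zero_lt_two
  have hmul : (γ + s) / 2 * ((γ - s) / 2) = 1 := by
    field_simp
    linear_combination -hs
  refine ⟨(γ + s) / 2, left_ne_zero_of_mul_eq_one hmul, ?_⟩
  rw [inv_eq_of_mul_eq_one_right hmul]
  ring

lemma preimage_form (d : ℕ) (hd : 2 ≤ d) (T : ℚ[X])
    (hT : ∀ x : ℂ, x ≠ 0 → aeval (x + x⁻¹) T = x ^ d + (x⁻¹) ^ d) :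
    ∀ n : ℕ, ∀ γ η : ℂ, (∃ m : ℕ, 1 ≤ m ∧ η ^ m = 1) →
      (fun z : ℂ => -(aeval z T))^[n] γ = η + η⁻¹ →
      ∃ k : ℕ, 1 ≤ k ∧ ∃ μ : ℂ, μ ^ k = 1 ∧ γ = μ + μ⁻¹ := by
  intro n
  induction n with
  | zero =>
    intro γ η hη h
    obtain ⟨m, hm, hηm⟩ := hη
    exact ⟨m, hm, η, hηm, by simpa using h⟩
  | succ n ih =>
    intro γ η hη h
    rw [Function.iterate_succ_apply] at h
    obtain ⟨k, hk, μ0, hμ0k, hform⟩ := ih (-(aeval γ T)) η hη h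
    obtain ⟨μ, hμ0, hμγ⟩ := exists_add_inv γ
    have hμ00 : μ0 ≠ 0 := by
      intro h0
      rw [h0, zero_pow (by omega : k ≠ 0)] at hμ0k
      exact zero_ne_one hμ0k
    have hTγ : aeval γ T = μ ^ d + (μ ^ d)⁻¹ := by
      rw [← hμγ, hT μ hμ0, inv_pow]
    have key : μ ^ d + (μ ^ d)⁻¹ = (-μ0) + (-μ0)⁻¹ := by
      rw [← hTγ, inv_neg]
      have : aeval γ T = -(μ0 + μ0⁻¹) := by
        rw [← hform]; ring
      rw [this]; ring
    have hμd0 : μ ^ d ≠ 0 := pow_ne_zero _ hμ0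
    have hneg : (-μ0) ≠ 0 := neg_ne_zero.mpr hμ00
    have hpow : (-μ0) ^ (2 * k) = 1 := by
      calc (-μ0) ^ (2 * k) = ((-μ0) ^ 2) ^ k := by rw [pow_mul]
        _ = (μ0 ^ 2) ^ k := by rw [neg_sq]
        _ = (μ0 ^ k) ^ 2 := by rw [← pow_mul, ← pow_mul, mul_comm]
        _ = 1 := by rw [hμ0k, one_pow]
    refine ⟨d * (2 * k), by nlinarith, μ, ?_, hμγ.symm⟩
    rcases add_inv_cases _ _ hμd0 hneg key with hcase | hcase
    · rw [pow_mul, hcase, hpow]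
    · rw [pow_mul, hcase, inv_pow, hpow, inv_one]

lemma rootsU_integral :
    ∀ s ∈ rootsU, IsIntegral ℚ s ∧ ((minpoly ℚ s).map (algebraMap ℚ ℂ)).Splits := by
  rintro s ⟨k, hk, hsk⟩
  refine ⟨⟨X ^ k - C 1, monic_X_pow_sub_C 1 (by omega), ?_⟩, IsAlgClosed.splits _⟩
  simp [hsk]

end NegChebAux

/-- `x : ℂ` lies in the maximal abelian extension `ℚ^ab` of `ℚ`. -/
def InQab (x : ℂ) : Prop :=
  ∃ F : IntermediateField ℚ ℂ, x ∈ F ∧ IsGalois ℚ F ∧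
    ∀ σ τ : F ≃ₐ[ℚ] F, σ * τ = τ * σ

/-- Let `T` be the degree-`d` Chebyshev polynomial (`d ≥ 2`), characterized by
`T(x + x⁻¹) = x^d + x^{-d}`, and let `ζ` be a root of unity. Then the dynamical Galois
group `G_∞(−T, ζ + ζ⁻¹)` over `ℚ` is abelian: all iterated preimages of `ζ + ζ⁻¹` under
`−T` lie in `ℚ^ab`. -/
theorem neg_chebyshev_abelian_arboreal (d : ℕ) (hd : 2 ≤ d) (T : ℚ[X])
    (hTdeg : T.natDegree = d)
    (hT : ∀ x : ℂ, x ≠ 0 → aeval (x + x⁻¹) T = x ^ d + (x⁻¹) ^ d)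
    (ζ : ℂ) (hζ : ∃ m : ℕ, 1 ≤ m ∧ ζ ^ m = 1) :
    (∀ γ : ℂ, (∃ n : ℕ, (fun z : ℂ => -(aeval z T))^[n] γ = ζ + ζ⁻¹) → InQab γ) ∧
    (∀ σ τ : (IntermediateField.adjoin ℚ
        {γ : ℂ | ∃ n : ℕ, (fun z : ℂ => -(aeval z T))^[n] γ = ζ + ζ⁻¹}) ≃ₐ[ℚ]
        (IntermediateField.adjoin ℚ
        {γ : ℂ | ∃ n : ℕ, (fun z : ℂ => -(aeval z T))^[n] γ = ζ + ζ⁻¹}),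
      σ * τ = τ * σ) := by
  set S : Set ℂ := {γ : ℂ | ∃ n : ℕ, (fun z : ℂ => -(aeval z T))^[n] γ = ζ + ζ⁻¹} with hS_def
  have hS_mem : ∀ γ ∈ S, γ ∈ Qcyc := by
    rintro γ ⟨n, hn⟩
    exact mem_Qcyc_of_form (preimage_form d hd T hT n γ ζ hζ hn)
  constructor
  · intro γ hγ
    exact ⟨Qcyc, hS_mem γ hγ, Qcyc_isGalois, Qcyc_equiv_comm⟩
  · set E := IntermediateField.adjoin ℚ S with hE_def
    have hE : E ≤ IntermediateField.adjoin ℚ rootsU := by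
      rw [hE_def, IntermediateField.adjoin_le_iff]
      exact fun γ hγ => hS_mem γ hγ
    -- extend any automorphism of E to an endomorphism of Qcyc
    have ext : ∀ ρ : E ≃ₐ[ℚ] E, ∃ ρ' : Qcyc →ₐ[ℚ] Qcyc,
        ∀ x (hx : x ∈ E), (ρ' ⟨x, hE hx⟩ : ℂ) = (ρ ⟨x, hx⟩ : ℂ) := by
      intro ρ
      obtain ⟨φ, hφ⟩ := IntermediateField.exists_algHom_adjoin_of_splits
        rootsU_integral (E.val.comp ρ.toAlgHom) hE
      have hrange : ∀ x : Qcyc, φ x ∈ Qcyc := by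
        intro x
        have h := @AlgHom.fieldRange_of_normal _ _ _ _ _ Qcyc Qcyc_normal φ
        rw [← h]
        exact ⟨x, rfl⟩
      refine ⟨{ toFun := fun x => ⟨φ x, hrange x⟩,
                map_one' := Subtype.ext (map_one φ),
                map_mul' := fun a b => Subtype.ext (map_mul φ a b),
                map_zero' := Subtype.ext (map_zero φ),
                map_add' := fun a b => Subtype.ext (map_add φ a b),
                commutes' := fun r => Subtype.ext (φ.commutes r) }, ?_⟩
      intro x hx
      show φ ⟨x, hE hx⟩ = _
      exact DFunLike.congr_fun hφ (⟨x, hx⟩ : E)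
    intro σ τ
    obtain ⟨σ', hσ'⟩ := ext σ
    obtain ⟨τ', hτ'⟩ := ext τ
    have hcomm := Qcyc_comm σ' τ'
    apply AlgEquiv.ext
    rintro ⟨x, hx⟩
    apply Subtype.ext
    show ((σ (τ ⟨x, hx⟩)) : ℂ) = ((τ (σ ⟨x, hx⟩)) : ℂ)
    have h1 : (⟨(τ ⟨x, hx⟩ : ℂ), hE (τ ⟨x, hx⟩).2⟩ : Qcyc) = τ' ⟨x, hE hx⟩ :=
      Subtype.ext (hτ' x hx).symm
    have h2 : (⟨(σ ⟨x, hx⟩ : ℂ), hE (σ ⟨x, hx⟩).2⟩ : Qcyc) = σ' ⟨x, hE hx⟩ :=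
      Subtype.ext (hσ' x hx).symm
    calc ((σ (τ ⟨x, hx⟩)) : ℂ)
        = (σ' ⟨(τ ⟨x, hx⟩ : ℂ), hE (τ ⟨x, hx⟩).2⟩ : ℂ) := (hσ' _ _).symm
      _ = (σ' (τ' ⟨x, hE hx⟩) : ℂ) := by rw [h1]
      _ = (τ' (σ' ⟨x, hE hx⟩) : ℂ) := by
          have := DFunLike.congr_fun hcomm (⟨x, hE hx⟩ : Qcyc)
          exact congrArg _ this
      _ = (τ' ⟨(σ ⟨x, hx⟩ : ℂ), hE (σ ⟨x, hx⟩).2⟩ : ℂ) := by rw [h2]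
      _ = ((τ (σ ⟨x, hx⟩)) : ℂ) := hτ' _ _
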